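/- Let μ be a probability measure on ℝ^{n_q}, and let A : ℝ^{n_q} → ℝ^{n×n} and B : ℝ^{n_q} → ℝ^{n×m} be bounded measurable matrix-valued maps. Let K ∈ ℝ^{m×n}, and let Q ∈ ℝ^{n×n}, R ∈ ℝ^{m×m}, P ∈ ℝ^{n×n} be symmetric with Q ≻ 0, R ≻ 0, and suppose Q + KᵀRK + E_{q∼μ}[(A(q) + B(q)K)ᵀ P (A(q) + B(q)K)] − P ⪯ 0 (Loewner order). For a horizon T ≥ 1, x ∈ ℝ^n and v = (v₀, …, v_{T−1}) ∈ (ℝ^m)^T, define the random trajectory over an i.i.d. sequence q₀, …, q_{T−1} ∼ μ by x₀ = x, u_l = K x_l + v_l, x_{l+1} = A(q_l)x_l + B(q_l)u_l, and the expected finite-horizon cost J_T(x, v) = E[ Σ_{l=0}^{T−1}(x_lᵀ Q x_l + u_lᵀ R u_l) + x_Tᵀ P x_T ], the expectation taken with respect to the T-fold product measure μ^T. Define the shifted candidate ṽ = (v₁, …, v_{T−1}, 0) ∈ (ℝ^m)^T. Then E_{q∼μ}[ J_T( (A(q) + B(q)K)x + B(q)v₀ , ṽ ) ] ≤ J_T(x,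 v) − xᵀ Q x − (Kx + v₀)ᵀ R (Kx + v₀). -/

import Mathlib

open MeasureTheory Matrix

/-- The prestabilized closed-loop trajectory: `x₀ = x`, `u_l = K x_l + v_l`,
`x_{l+1} = A(q_l) x_l + B(q_l) u_l`. -/
noncomputable def smpcTraj {nq n m : ℕ}
    (A : (Fin nq → ℝ) → Matrix (Fin n) (Fin n) ℝ)
    (B : (Fin nq → ℝ) → Matrix (Fin n) (Fin m) ℝ)
    (K : Matrix (Fin m) (Fin n) ℝ)
    (x : Fin n → ℝ) (v : ℕ → Fin m → ℝ) (q : ℕ → Fin nq → ℝ) : ℕ → Fin n → ℝ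
  | 0 => x
  | l + 1 =>
      (A (q l)).mulVec (smpcTraj A B K x v q l) +
        (B (q l)).mulVec (K.mulVec (smpcTraj A B K x v q l) + v l)

/-- Extension of a `Fin T`-indexed family by zero. -/
def extendByZero {T : ℕ} {α : Type*} [Zero α] (f : Fin T → α) : ℕ → α :=
  fun l => if h : l < T then f ⟨l, h⟩ else 0

/-- The expected finite-horizon cost
`J_T(x,v) = E[ Σ_{l<T} (x_lᵀ Q x_l + u_lᵀ R u_l) + x_Tᵀ P x_T ]`, the expectation
taken w.r.t. the `T`-fold product measure `μ^T`. -/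
noncomputable def smpcCost {nq n m : ℕ} (T : ℕ)
    (μ : Measure (Fin nq → ℝ))
    (A : (Fin nq → ℝ) → Matrix (Fin n) (Fin n) ℝ)
    (B : (Fin nq → ℝ) → Matrix (Fin n) (Fin m) ℝ)
    (K : Matrix (Fin m) (Fin n) ℝ)
    (Q : Matrix (Fin n) (Fin n) ℝ) (R : Matrix (Fin m) (Fin m) ℝ)
    (P : Matrix (Fin n) (Fin n) ℝ)
    (x : Fin n → ℝ) (v : Fin T → Fin m → ℝ) : ℝ :=
  ∫ q : Fin T → (Fin nq → ℝ),
    ((∑ l ∈ Finset.range T,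
        (smpcTraj A B K x (extendByZero v) (extendByZero q) l ⬝ᵥ
            Q.mulVec (smpcTraj A B K x (extendByZero v) (extendByZero q) l) +
          (K.mulVec (smpcTraj A B K x (extendByZero v) (extendByZero q) l) +
              extendByZero v l) ⬝ᵥ
            R.mulVec
              (K.mulVec (smpcTraj A B K x (extendByZero v) (extendByZero q) l) +
                extendByZero v l))) +
      smpcTraj A B K x (extendByZero v) (extendByZero q) T ⬝ᵥ
        P.mulVec (smpcTraj A B K x (extendByZero v) (extendByZero q) T))
    ∂(Measure.pi fun _ : Fin T => μ)

/-! ### Auxiliary lemmas -/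

section aux

lemma extendByZero_lt {T : ℕ} {α : Type*} [Zero α] (f : Fin T → α) {l : ℕ} (h : l < T) :
    extendByZero f l = f ⟨l, h⟩ := dif_pos h

lemma extendByZero_ge {T : ℕ} {α : Type*} [Zero α] (f : Fin T → α) {l : ℕ} (h : T ≤ l) :
    extendByZero f l = 0 := dif_neg (not_lt.2 h)

lemma extendByZero_cons {T : ℕ} {α : Type*} [Zero α] (a : α) (f : Fin T → α) (l : ℕ) :
    extendByZero (Fin.cons a f : Fin (T+1) → α) (l+1) = extendByZero f l := by
  by_cases h : l < T
  · rw [extendByZero_lt _ (by omega : l + 1 < T + 1), extendByZero_lt _ h]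
    exact Fin.cons_succ (α := fun _ : Fin (T+1) => α) a f ⟨l, h⟩
  · rw [extendByZero_ge _ (by omega), extendByZero_ge _ (by omega)]

lemma extendByZero_cons_zero {T : ℕ} {α : Type*} [Zero α] (a : α) (f : Fin T → α) :
    extendByZero (Fin.cons a f : Fin (T+1) → α) 0 = a := by
  rw [extendByZero_lt _ (Nat.succ_pos T)]; rfl

lemma extendByZero_shift {m T : ℕ} (v : Fin T → Fin m → ℝ) (l : ℕ) :
    extendByZero (fun l : Fin T => if h : (l : ℕ) + 1 < T then v ⟨(l : ℕ) + 1, h⟩ else 0) l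
      = extendByZero v (l+1) := by
  by_cases h : l < T
  · rw [extendByZero_lt _ h]
    by_cases h2 : l + 1 < T
    · rw [dif_pos h2, extendByZero_lt _ h2]
    · rw [dif_neg h2, extendByZero_ge _ (by omega)]
  · rw [extendByZero_ge _ (by omega), extendByZero_ge _ (by omega)]

variable {nq n m : ℕ}
  {A : (Fin nq → ℝ) → Matrix (Fin n) (Fin n) ℝ}
  {B : (Fin nq → ℝ) → Matrix (Fin n) (Fin m) ℝ}
  (K : Matrix (Fin m) (Fin n) ℝ)

lemma smpcTraj_congr (x : Fin n → ℝ) (v : ℕ → Fin m → ℝ) {q₁ q₂ : ℕ → Fin nq → ℝ} :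
    ∀ l, (∀ k, k < l → q₁ k = q₂ k) → smpcTraj A B K x v q₁ l = smpcTraj A B K x v q₂ l
  | 0, _ => rfl
  | l+1, h => by
      have IH := smpcTraj_congr x v l (fun k hk => h k (Nat.lt_succ_of_lt hk))
      simp only [smpcTraj, IH, h l (Nat.lt_succ_self l)]

lemma smpcTraj_shift {T : ℕ} (hT : 1 ≤ T) (x : Fin n → ℝ) (v : Fin T → Fin m → ℝ)
    (q : Fin nq → ℝ) (q' : Fin T → Fin nq → ℝ) :
    ∀ l, smpcTraj A B K ((A q + B q * K).mulVec x + (B q).mulVec (v ⟨0, hT⟩))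
        (extendByZero (fun l : Fin T => if h : (l : ℕ) + 1 < T then v ⟨(l : ℕ) + 1, h⟩ else 0))
        (extendByZero q') l
      = smpcTraj A B K x (extendByZero v) (extendByZero (Fin.cons q q' : Fin (T+1) → _)) (l+1)
  | 0 => by
      show _ = (A _).mulVec x + (B _).mulVec (K.mulVec x + extendByZero v 0)
      rw [extendByZero_cons_zero, extendByZero_lt v hT]
      show (A q + B q * K).mulVec x + (B q).mulVec (v ⟨0, hT⟩) = _
      rw [add_mulVec, mulVec_add, ← mulVec_mulVec, add_assoc]
  | l+1 => by
      show (A _).mulVec _ + (B _).mulVec (K.mulVec _ + _) = _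
      rw [smpcTraj_shift hT x v q q' l, extendByZero_shift,
        show extendByZero q' l = extendByZero (Fin.cons q q' : Fin (T+1) → _) (l+1) from
          (extendByZero_cons q q' l).symm]
      rfl

lemma measurable_extendByZero {N : ℕ} (l : ℕ) :
    Measurable fun ω : Fin N → Fin nq → ℝ => extendByZero ω l := by
  unfold extendByZero
  by_cases h : l < N
  · simp only [dif_pos h]; exact measurable_pi_apply _
  · simp only [dif_neg h]; exact measurable_const

lemma smpcTraj_measurable (hAmeas : ∀ i j, Measurable fun q => A q i j)
    (hBmeas : ∀ i j, Measurable fun q => B q i j)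
    (x : Fin n → ℝ) (v : ℕ → Fin m → ℝ) (N : ℕ) :
    ∀ l i, Measurable fun ω : Fin N → Fin nq → ℝ =>
      smpcTraj A B K x v (extendByZero ω) l i
  | 0, i => measurable_const
  | l+1, i => by
      have hq : Measurable fun ω : Fin N → Fin nq → ℝ => extendByZero ω l :=
        measurable_extendByZero l
      have IH := smpcTraj_measurable hAmeas hBmeas x v N l
      simp only [smpcTraj, Pi.add_apply, mulVec, dotProduct]
      exact (Finset.measurable_sum _ fun j _ => ((hAmeas i j).comp hq).mul (IH j)).add
        (Finset.measurable_sum _ fun j _ => ((hBmeas i j).comp hq).mul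
          ((Finset.measurable_sum _ fun k _ => measurable_const.mul (IH k)).add
            measurable_const))

lemma smpcTraj_bounded (hAbdd : ∃ C : ℝ, ∀ q i j, |A q i j| ≤ C)
    (hBbdd : ∃ C : ℝ, ∀ q i j, |B q i j| ≤ C)
    (x : Fin n → ℝ) (v : ℕ → Fin m → ℝ) :
    ∀ l : ℕ, ∃ C : ℝ, 0 ≤ C ∧ ∀ (q : ℕ → Fin nq → ℝ) (i : Fin n),
      |smpcTraj A B K x v q l i| ≤ C := by
  obtain ⟨CA, hCA⟩ := hAbdd
  obtain ⟨CB, hCB⟩ := hBbdd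
  have hCA' : ∀ q i j, |A q i j| ≤ max CA 0 := fun q i j => (hCA q i j).trans (le_max_left _ _)
  have hCB' : ∀ q i j, |B q i j| ≤ max CB 0 := fun q i j => (hCB q i j).trans (le_max_left _ _)
  intro l
  induction l with
  | zero =>
      refine ⟨∑ i, |x i|, Finset.sum_nonneg fun _ _ => abs_nonneg _, fun q i => ?_⟩
      exact Finset.single_le_sum (f := fun i => |x i|) (fun _ _ => abs_nonneg _)
        (Finset.mem_univ i)
  | succ l IH =>
      obtain ⟨C, hC0, hC⟩ := IH
      set CK : ℝ := ∑ j : Fin m, ∑ k : Fin n, |K j k| with hCKdef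
      have hCK0 : 0 ≤ CK := Finset.sum_nonneg fun _ _ => Finset.sum_nonneg fun _ _ => abs_nonneg _
      set Dv : ℝ := ∑ j : Fin m, |v l j| with hDvdef
      have hDv0 : 0 ≤ Dv := Finset.sum_nonneg fun _ _ => abs_nonneg _
      set D : ℝ := CK * C + Dv with hDdef
      have hD0 : 0 ≤ D := add_nonneg (mul_nonneg hCK0 hC0) hDv0
      refine ⟨(n : ℝ) * (max CA 0 * C) + (m : ℝ) * (max CB 0 * D), ?_, ?_⟩
      · positivity
      intro q i
      have hu : ∀ j : Fin m, |(K.mulVec (smpcTraj A B K x v q l) + v l) j| ≤ D := by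
        intro j
        have h1 : |K.mulVec (smpcTraj A B K x v q l) j| ≤ CK * C := by
          calc |K.mulVec (smpcTraj A B K x v q l) j|
              = |∑ k, K j k * smpcTraj A B K x v q l k| := by simp [mulVec, dotProduct]
            _ ≤ ∑ k, |K j k * smpcTraj A B K x v q l k| := Finset.abs_sum_le_sum_abs _ _
            _ ≤ ∑ k, |K j k| * C := by
                refine Finset.sum_le_sum fun k _ => ?_
                rw [abs_mul]
                exact mul_le_mul_of_nonneg_left (hC q k) (abs_nonneg _)
            _ = (∑ k, |K j k|) * C := by rw [Finset.sum_mul]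
            _ ≤ CK * C := by
                refine mul_le_mul_of_nonneg_right ?_ hC0
                exact Finset.single_le_sum (f := fun j => ∑ k, |K j k|)
                  (fun _ _ => Finset.sum_nonneg fun _ _ => abs_nonneg _) (Finset.mem_univ j)
        have h2 : |v l j| ≤ Dv :=
          Finset.single_le_sum (f := fun j => |v l j|) (fun _ _ => abs_nonneg _)
            (Finset.mem_univ j)
        calc |(K.mulVec (smpcTraj A B K x v q l) + v l) j|
            ≤ |K.mulVec (smpcTraj A B K x v q l) j| + |v l j| := abs_add_le _ _
          _ ≤ CK * C + Dv := add_le_add h1 h2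
      calc |smpcTraj A B K x v q (l+1) i|
          ≤ |(A (q l)).mulVec (smpcTraj A B K x v q l) i| +
              |(B (q l)).mulVec (K.mulVec (smpcTraj A B K x v q l) + v l) i| := abs_add_le _ _
        _ ≤ (n : ℝ) * (max CA 0 * C) + (m : ℝ) * (max CB 0 * D) := by
            refine add_le_add ?_ ?_
            · calc |(A (q l)).mulVec (smpcTraj A B K x v q l) i|
                  = |∑ j, A (q l) i j * smpcTraj A B K x v q l j| := by
                    simp [mulVec, dotProduct]
                _ ≤ ∑ j, |A (q l) i j * smpcTraj A B K x v q l j| :=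
                    Finset.abs_sum_le_sum_abs _ _
                _ ≤ ∑ _j : Fin n, max CA 0 * C := by
                    refine Finset.sum_le_sum fun j _ => ?_
                    rw [abs_mul]
                    exact mul_le_mul (hCA' _ _ _) (hC q j) (abs_nonneg _) (le_max_right _ _)
                _ = (n : ℝ) * (max CA 0 * C) := by simp [mul_comm]
            · calc |(B (q l)).mulVec (K.mulVec (smpcTraj A B K x v q l) + v l) i|
                  = |∑ j, B (q l) i j * (K.mulVec (smpcTraj A B K x v q l) + v l) j| := by
                    simp [mulVec, dotProduct]
                _ ≤ ∑ j, |B (q l) i j * (K.mulVec (smpcTraj A B K x v q l) + v l) j| :=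
                    Finset.abs_sum_le_sum_abs _ _
                _ ≤ ∑ _j : Fin m, max CB 0 * D := by
                    refine Finset.sum_le_sum fun j _ => ?_
                    rw [abs_mul]
                    exact mul_le_mul (hCB' _ _ _) (hu j) (abs_nonneg _) (le_max_right _ _)
                _ = (m : ℝ) * (max CB 0 * D) := by simp [mul_comm]

end aux

section bilin

lemma measurable_bilin {α : Type*} [MeasurableSpace α] {a b : ℕ}
    (S : Matrix (Fin a) (Fin b) ℝ) {f : α → Fin a → ℝ} {g : α → Fin b → ℝ}
    (hf : ∀ i, Measurable fun ω => f ω i) (hg : ∀ j, Measurable fun ω => g ω j) :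
    Measurable fun ω => f ω ⬝ᵥ S *ᵥ g ω := by
  simp only [dotProduct, mulVec]
  exact Finset.measurable_sum _ fun i _ => (hf i).mul
    (Finset.measurable_sum _ fun j _ => measurable_const.mul (hg j))

lemma abs_bilin_le {a b : ℕ} (S : Matrix (Fin a) (Fin b) ℝ) {f : Fin a → ℝ} {g : Fin b → ℝ}
    {Cf Cg : ℝ} (hCf : 0 ≤ Cf) (hf : ∀ i, |f i| ≤ Cf) (hg : ∀ j, |g j| ≤ Cg) :
    |f ⬝ᵥ S *ᵥ g| ≤ ∑ i, ∑ j, |S i j| * (Cf * Cg) := by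
  have h1 : f ⬝ᵥ S *ᵥ g = ∑ i, f i * ∑ j, S i j * g j := by simp [dotProduct, mulVec]
  rw [h1]
  refine (Finset.abs_sum_le_sum_abs _ _).trans (Finset.sum_le_sum fun i _ => ?_)
  rw [abs_mul]
  calc |f i| * |∑ j, S i j * g j| ≤ Cf * ∑ j, |S i j| * Cg := by
        refine mul_le_mul (hf i) ?_ (abs_nonneg _) hCf
        refine (Finset.abs_sum_le_sum_abs _ _).trans (Finset.sum_le_sum fun j _ => ?_)
        rw [abs_mul]; exact mul_le_mul_of_nonneg_left (hg j) (abs_nonneg _)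
    _ = ∑ j, |S i j| * (Cf * Cg) := by
        rw [Finset.mul_sum]; exact Finset.sum_congr rfl fun j _ => by ring

lemma dotProduct_quadform {a b : ℕ} (N : Matrix (Fin a) (Fin b) ℝ)
    (P : Matrix (Fin a) (Fin a) ℝ) (y : Fin b → ℝ) :
    (N *ᵥ y) ⬝ᵥ P *ᵥ (N *ᵥ y) = y ⬝ᵥ (Nᵀ * P * N) *ᵥ y := by
  conv_rhs => rw [← mulVec_mulVec, ← mulVec_mulVec, dotProduct_mulVec, vecMul_transpose]

lemma integral_quadform {nq a : ℕ} (μ : Measure (Fin nq → ℝ)) [IsProbabilityMeasure μ]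
    {M : (Fin nq → ℝ) → Matrix (Fin a) (Fin a) ℝ}
    (hent : ∀ i j, Integrable (fun q => M q i j) μ) (y : Fin a → ℝ) :
    ∫ q, y ⬝ᵥ (M q) *ᵥ y ∂μ = y ⬝ᵥ (Matrix.of fun i j => ∫ q, M q i j ∂μ) *ᵥ y := by
  simp only [dotProduct, mulVec, Matrix.of_apply]
  rw [integral_finset_sum]
  · refine Finset.sum_congr rfl fun i _ => ?_
    rw [integral_const_mul, integral_finset_sum _ fun j _ => (hent i j).mul_const _]
    congr 1
    exact Finset.sum_congr rfl fun j _ => integral_mul_const _ _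
  · intro i _
    exact (integrable_finset_sum _ fun j _ => (hent i j).mul_const _).const_mul _

end bilin

section fubini
variable {β : Type*} [MeasurableSpace β]

lemma integrable_of_bounded' {α : Type*} [MeasurableSpace α] {ν : Measure α}
    [IsFiniteMeasure ν] {f : α → ℝ} (hf : Measurable f) (C : ℝ) (h : ∀ a, |f a| ≤ C) :
    Integrable f ν :=
  (integrable_const C).mono' hf.aestronglyMeasurable
    (Filter.Eventually.of_forall fun a => by simpa using h a)

lemma measurable_cons_pair {N : ℕ} :
    Measurable fun p : β × (Fin N → β) => (Fin.cons p.1 p.2 : Fin (N+1) → β) := by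
  refine measurable_pi_lambda _ fun i => ?_
  refine Fin.cases ?_ ?_ i
  · exact measurable_fst
  · intro j
    exact (measurable_pi_apply j).comp measurable_snd

lemma measurable_snoc_pair {N : ℕ} :
    Measurable fun p : β × (Fin N → β) => (Fin.snoc p.2 p.1 : Fin (N+1) → β) := by
  refine measurable_pi_lambda _ fun i => ?_
  refine Fin.lastCases ?_ ?_ i
  · simpa using measurable_fst
  · intro j
    simpa [Function.comp_def] using (measurable_pi_apply j).comp measurable_snd

lemma integral_pi_succ_left {N : ℕ} (μ : Measure β) [IsProbabilityMeasure μ]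
    (g : (Fin (N+1) → β) → ℝ) (hg : Measurable g) (C : ℝ) (hb : ∀ ω, |g ω| ≤ C) :
    ∫ ω, g ω ∂(Measure.pi fun _ : Fin (N+1) => μ)
      = ∫ q, ∫ q', g (Fin.cons q q') ∂(Measure.pi fun _ : Fin N => μ) ∂μ := by
  have hmp := measurePreserving_piFinSuccAbove (fun _ : Fin (N+1) => μ) 0
  set e := MeasurableEquiv.piFinSuccAbove (fun _ : Fin (N+1) => β) 0 with he
  have hint : Integrable (fun p : β × (Fin N → β) => g (Fin.cons p.1 p.2))
      (μ.prod (Measure.pi fun _ : Fin N => μ)) :=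
    integrable_of_bounded' (hg.comp measurable_cons_pair) C fun p => hb _
  rw [← integral_prod _ hint]
  rw [← hmp.integral_comp e.measurableEmbedding (fun p => g (Fin.cons p.1 p.2))]
  congr 1
  funext ω
  have : (e ω) = (ω 0, fun j => ω ((0 : Fin (N+1)).succAbove j)) := rfl
  rw [this]
  simp only [Fin.succAbove_zero]
  exact (congrArg g (Fin.cons_self_tail ω)).symm

lemma integral_pi_succ_right {N : ℕ} (μ : Measure β) [IsProbabilityMeasure μ]
    (g : (Fin (N+1) → β) → ℝ) (hg : Measurable g) (C : ℝ) (hb : ∀ ω, |g ω| ≤ C) :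
    ∫ ω, g ω ∂(Measure.pi fun _ : Fin (N+1) => μ)
      = ∫ q', ∫ q, g (Fin.snoc q' q) ∂μ ∂(Measure.pi fun _ : Fin N => μ) := by
  have hmp := measurePreserving_piFinSuccAbove (fun _ : Fin (N+1) => μ) (Fin.last N)
  set e := MeasurableEquiv.piFinSuccAbove (fun _ : Fin (N+1) => β) (Fin.last N) with he
  have hint : Integrable (fun p : β × (Fin N → β) => g (Fin.snoc p.2 p.1))
      (μ.prod (Measure.pi fun _ : Fin N => μ)) :=
    integrable_of_bounded' (hg.comp measurable_snoc_pair) C fun p => hb _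
  rw [← integral_prod_symm _ hint]
  rw [← hmp.integral_comp e.measurableEmbedding (fun p => g (Fin.snoc p.2 p.1))]
  congr 1
  funext ω
  have : (e ω) = (ω (Fin.last N), fun j => ω ((Fin.last N).succAbove j)) := rfl
  rw [this]
  simp only [Fin.succAbove_last]
  exact (congrArg g (Fin.snoc_init_self ω)).symm

lemma integral_pi_init {N : ℕ} (μ : Measure β) [IsProbabilityMeasure μ]
    (G : (Fin N → β) → ℝ) (hG : Measurable G) (C : ℝ) (hb : ∀ q', |G q'| ≤ C) :
    ∫ ω, G (Fin.init ω) ∂(Measure.pi fun _ : Fin (N+1) => μ)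
      = ∫ q', G q' ∂(Measure.pi fun _ : Fin N => μ) := by
  rw [integral_pi_succ_right μ (fun ω => G (Fin.init ω))
      (hG.comp (by exact measurable_pi_lambda _ fun j => measurable_pi_apply _)) C
      (fun ω => hb _)]
  have : ∀ (q' : Fin N → β) (q : β), G (Fin.init (Fin.snoc q' q : Fin (N+1) → β)) = G q' := by
    intro q' q
    rw [Fin.init_snoc]
  simp only [this, integral_const, measure_univ, ENNReal.toReal_one, probReal_univ, one_smul]

end fubini

section main
end main
/-! ### Stage and terminal cost atoms -/

noncomputable def stageC {nq n m : ℕ}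
    (A : (Fin nq → ℝ) → Matrix (Fin n) (Fin n) ℝ)
    (B : (Fin nq → ℝ) → Matrix (Fin n) (Fin m) ℝ)
    (K : Matrix (Fin m) (Fin n) ℝ)
    (Q : Matrix (Fin n) (Fin n) ℝ) (R : Matrix (Fin m) (Fin m) ℝ)
    (x : Fin n → ℝ) (v : ℕ → Fin m → ℝ) (qs : ℕ → Fin nq → ℝ) (l : ℕ) : ℝ :=
  smpcTraj A B K x v qs l ⬝ᵥ Q.mulVec (smpcTraj A B K x v qs l) +
    (K.mulVec (smpcTraj A B K x v qs l) + v l) ⬝ᵥ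
      R.mulVec (K.mulVec (smpcTraj A B K x v qs l) + v l)

noncomputable def termC {nq n m : ℕ}
    (A : (Fin nq → ℝ) → Matrix (Fin n) (Fin n) ℝ)
    (B : (Fin nq → ℝ) → Matrix (Fin n) (Fin m) ℝ)
    (K : Matrix (Fin m) (Fin n) ℝ)
    (P : Matrix (Fin n) (Fin n) ℝ)
    (x : Fin n → ℝ) (v : ℕ → Fin m → ℝ) (qs : ℕ → Fin nq → ℝ) (l : ℕ) : ℝ :=
  smpcTraj A B K x v qs l ⬝ᵥ P.mulVec (smpcTraj A B K x v qs l)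

section atoms
variable {nq n m : ℕ}
  {A : (Fin nq → ℝ) → Matrix (Fin n) (Fin n) ℝ}
  {B : (Fin nq → ℝ) → Matrix (Fin n) (Fin m) ℝ}
  (K : Matrix (Fin m) (Fin n) ℝ)

lemma uEntry_meas (hAmeas : ∀ i j, Measurable fun q => A q i j)
    (hBmeas : ∀ i j, Measurable fun q => B q i j)
    (x : Fin n → ℝ) (v : ℕ → Fin m → ℝ) (N l : ℕ) :
    ∀ j, Measurable fun ω : Fin N → Fin nq → ℝ =>
      (K.mulVec (smpcTraj A B K x v (extendByZero ω) l) + v l) j := by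
  intro j
  simp only [Pi.add_apply, mulVec, dotProduct]
  exact (Finset.measurable_sum _ fun k _ => measurable_const.mul
    (smpcTraj_measurable K hAmeas hBmeas x v N l k)).add measurable_const

lemma uEntry_bdd (hAbdd : ∃ C : ℝ, ∀ q i j, |A q i j| ≤ C)
    (hBbdd : ∃ C : ℝ, ∀ q i j, |B q i j| ≤ C)
    (x : Fin n → ℝ) (v : ℕ → Fin m → ℝ) (l : ℕ) :
    ∃ D : ℝ, 0 ≤ D ∧ ∀ (qs : ℕ → Fin nq → ℝ) (j : Fin m),
      |(K.mulVec (smpcTraj A B K x v qs l) + v l) j| ≤ D := by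
  obtain ⟨C, hC0, hC⟩ := smpcTraj_bounded K hAbdd hBbdd x v l
  have hKC0 : (0:ℝ) ≤ ∑ j : Fin m, ∑ k : Fin n, |K j k| :=
    Finset.sum_nonneg fun _ _ => Finset.sum_nonneg fun _ _ => abs_nonneg _
  refine ⟨(∑ j : Fin m, ∑ k : Fin n, |K j k|) * C + ∑ j' : Fin m, |v l j'|, by positivity,
    fun qs j => ?_⟩
  have h1 : |K.mulVec (smpcTraj A B K x v qs l) j| ≤ (∑ j : Fin m, ∑ k, |K j k|) * C := by
    calc |K.mulVec (smpcTraj A B K x v qs l) j|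
        = |∑ k, K j k * smpcTraj A B K x v qs l k| := by simp [mulVec, dotProduct]
      _ ≤ ∑ k, |K j k * smpcTraj A B K x v qs l k| := Finset.abs_sum_le_sum_abs _ _
      _ ≤ ∑ k, |K j k| * C := by
          refine Finset.sum_le_sum fun k _ => ?_
          rw [abs_mul]; exact mul_le_mul_of_nonneg_left (hC qs k) (abs_nonneg _)
      _ = (∑ k, |K j k|) * C := by rw [Finset.sum_mul]
      _ ≤ (∑ j : Fin m, ∑ k, |K j k|) * C := by
          refine mul_le_mul_of_nonneg_right ?_ hC0
          exact Finset.single_le_sum (f := fun j => ∑ k, |K j k|)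
            (fun _ _ => Finset.sum_nonneg fun _ _ => abs_nonneg _) (Finset.mem_univ j)
  have h2 : |v l j| ≤ ∑ j' : Fin m, |v l j'| :=
    Finset.single_le_sum (f := fun j' => |v l j'|) (fun _ _ => abs_nonneg _) (Finset.mem_univ j)
  calc |(K.mulVec (smpcTraj A B K x v qs l) + v l) j|
      ≤ |K.mulVec (smpcTraj A B K x v qs l) j| + |v l j| := abs_add_le _ _
    _ ≤ _ := add_le_add h1 h2

lemma stageC_meas (hAmeas : ∀ i j, Measurable fun q => A q i j)
    (hBmeas : ∀ i j, Measurable fun q => B q i j)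
    (Q : Matrix (Fin n) (Fin n) ℝ) (R : Matrix (Fin m) (Fin m) ℝ)
    (x : Fin n → ℝ) (v : ℕ → Fin m → ℝ) (N l : ℕ) :
    Measurable fun ω : Fin N → Fin nq → ℝ => stageC A B K Q R x v (extendByZero ω) l := by
  unfold stageC
  exact (measurable_bilin Q (smpcTraj_measurable K hAmeas hBmeas x v N l)
      (smpcTraj_measurable K hAmeas hBmeas x v N l)).add
    (measurable_bilin R (uEntry_meas K hAmeas hBmeas x v N l) (uEntry_meas K hAmeas hBmeas x v N l))

lemma termC_meas (hAmeas : ∀ i j, Measurable fun q => A q i j)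
    (hBmeas : ∀ i j, Measurable fun q => B q i j)
    (P : Matrix (Fin n) (Fin n) ℝ)
    (x : Fin n → ℝ) (v : ℕ → Fin m → ℝ) (N l : ℕ) :
    Measurable fun ω : Fin N → Fin nq → ℝ => termC A B K P x v (extendByZero ω) l := by
  unfold termC
  exact measurable_bilin P (smpcTraj_measurable K hAmeas hBmeas x v N l)
    (smpcTraj_measurable K hAmeas hBmeas x v N l)

lemma stageC_bdd (hAbdd : ∃ C : ℝ, ∀ q i j, |A q i j| ≤ C)
    (hBbdd : ∃ C : ℝ, ∀ q i j, |B q i j| ≤ C)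
    (Q : Matrix (Fin n) (Fin n) ℝ) (R : Matrix (Fin m) (Fin m) ℝ)
    (x : Fin n → ℝ) (v : ℕ → Fin m → ℝ) (l : ℕ) :
    ∃ C : ℝ, ∀ qs : ℕ → Fin nq → ℝ, |stageC A B K Q R x v qs l| ≤ C := by
  obtain ⟨C, hC0, hC⟩ := smpcTraj_bounded K hAbdd hBbdd x v l
  obtain ⟨D, hD0, hD⟩ := uEntry_bdd K hAbdd hBbdd x v l
  refine ⟨(∑ i, ∑ j, |Q i j| * (C * C)) + ∑ i, ∑ j, |R i j| * (D * D), fun qs => ?_⟩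
  exact (abs_add_le _ _).trans (add_le_add
    (abs_bilin_le Q hC0 (hC qs) (hC qs)) (abs_bilin_le R hD0 (hD qs) (hD qs)))

lemma termC_bdd (hAbdd : ∃ C : ℝ, ∀ q i j, |A q i j| ≤ C)
    (hBbdd : ∃ C : ℝ, ∀ q i j, |B q i j| ≤ C)
    (P : Matrix (Fin n) (Fin n) ℝ)
    (x : Fin n → ℝ) (v : ℕ → Fin m → ℝ) (l : ℕ) :
    ∃ C : ℝ, ∀ qs : ℕ → Fin nq → ℝ, |termC A B K P x v qs l| ≤ C := by
  obtain ⟨C, hC0, hC⟩ := smpcTraj_bounded K hAbdd hBbdd x v l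
  exact ⟨_, fun qs => abs_bilin_le P hC0 (hC qs) (hC qs)⟩

end atoms
/-- expected cost decrease along the shifted candidate solution, under
the stochastic Lyapunov condition `Q + KᵀRK + E[A_cl(q)ᵀ P A_cl(q)] − P ⪯ 0`. -/
theorem smpc_expected_cost_decrease
    {nq n m : ℕ} (T : ℕ) (hT : 1 ≤ T)
    (μ : Measure (Fin nq → ℝ)) [IsProbabilityMeasure μ]
    (A : (Fin nq → ℝ) → Matrix (Fin n) (Fin n) ℝ)
    (B : (Fin nq → ℝ) → Matrix (Fin n) (Fin m) ℝ)
    (hAmeas : ∀ i j, Measurable fun q => A q i j)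
    (hBmeas : ∀ i j, Measurable fun q => B q i j)
    (hAbdd : ∃ C : ℝ, ∀ q i j, |A q i j| ≤ C)
    (hBbdd : ∃ C : ℝ, ∀ q i j, |B q i j| ≤ C)
    (K : Matrix (Fin m) (Fin n) ℝ)
    (Q P : Matrix (Fin n) (Fin n) ℝ) (R : Matrix (Fin m) (Fin m) ℝ)
    (hQ : Q.PosDef) (hR : R.PosDef) (hPsymm : P.IsSymm)
    (hLyap : (P - (Q + Kᵀ * R * K +
        Matrix.of fun i j =>
          ∫ q, ((A q + B q * K)ᵀ * P * (A q + B q * K)) i j ∂μ)).PosSemidef)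
    (x : Fin n → ℝ) (v : Fin T → Fin m → ℝ) :
    ∫ q, smpcCost T μ A B K Q R P
        ((A q + B q * K).mulVec x + (B q).mulVec (v ⟨0, hT⟩))
        (fun l : Fin T => if h : (l : ℕ) + 1 < T then v ⟨(l : ℕ) + 1, h⟩ else 0) ∂μ ≤
      smpcCost T μ A B K Q R P x v - x ⬝ᵥ Q.mulVec x -
        (K.mulVec x + v ⟨0, hT⟩) ⬝ᵥ R.mulVec (K.mulVec x + v ⟨0, hT⟩) := by
  classical
  -- abbreviations
  set π1 : Measure (Fin (T+1) → Fin nq → ℝ) := Measure.pi fun _ : Fin (T+1) => μ with hπ1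
  set gR : (Fin (T+1) → Fin nq → ℝ) → ℝ := fun ω =>
    (∑ l ∈ Finset.range T, stageC A B K Q R x (extendByZero v) (extendByZero ω) l) +
      termC A B K P x (extendByZero v) (extendByZero ω) T with hgRdef
  set gL : (Fin (T+1) → Fin nq → ℝ) → ℝ := fun ω =>
    (∑ l ∈ Finset.range T, stageC A B K Q R x (extendByZero v) (extendByZero ω) (l+1)) +
      termC A B K P x (extendByZero v) (extendByZero ω) (T+1) with hgLdef
  set gC : (Fin (T+1) → Fin nq → ℝ) → ℝ := fun ω =>
    stageC A B K Q R x (extendByZero v) (extendByZero ω) T +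
      termC A B K P x (extendByZero v) (extendByZero ω) (T+1) -
      termC A B K P x (extendByZero v) (extendByZero ω) T with hgCdef
  set s0 : ℝ := x ⬝ᵥ Q.mulVec x +
    (K.mulVec x + v ⟨0, hT⟩) ⬝ᵥ R.mulVec (K.mulVec x + v ⟨0, hT⟩) with hs0def
  -- cost unfolding
  have hcost_eq : ∀ (x' : Fin n → ℝ) (v'' : Fin T → Fin m → ℝ),
      smpcCost T μ A B K Q R P x' v'' =
        ∫ q', (∑ l ∈ Finset.range T,
            stageC A B K Q R x' (extendByZero v'') (extendByZero q') l) +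
          termC A B K P x' (extendByZero v'') (extendByZero q') T
          ∂(Measure.pi fun _ : Fin T => μ) := fun _ _ => rfl
  -- per-stage bounds
  choose CS hCS using fun l => stageC_bdd K hAbdd hBbdd Q R x (extendByZero v) l
  choose CP hCP using fun l => termC_bdd K hAbdd hBbdd P x (extendByZero v) l
  -- measurability of the three functions on the (T+1)-fold product
  have hgRm : Measurable gR := by
    rw [hgRdef]
    exact (Finset.measurable_sum _ fun l _ =>
        stageC_meas K hAmeas hBmeas Q R x (extendByZero v) (T+1) l).add
      (termC_meas K hAmeas hBmeas P x (extendByZero v) (T+1) T)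
  have hgLm : Measurable gL := by
    rw [hgLdef]
    exact (Finset.measurable_sum _ fun l _ =>
        stageC_meas K hAmeas hBmeas Q R x (extendByZero v) (T+1) (l+1)).add
      (termC_meas K hAmeas hBmeas P x (extendByZero v) (T+1) (T+1))
  have hgCm : Measurable gC := by
    rw [hgCdef]
    exact ((stageC_meas K hAmeas hBmeas Q R x (extendByZero v) (T+1) T).add
      (termC_meas K hAmeas hBmeas P x (extendByZero v) (T+1) (T+1))).sub
      (termC_meas K hAmeas hBmeas P x (extendByZero v) (T+1) T)
  -- bounds
  have habs2 : ∀ a b ca cb : ℝ, |a| ≤ ca → |b| ≤ cb → |a + b| ≤ ca + cb :=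
    fun a b ca cb ha hb => (abs_add_le a b).trans (add_le_add ha hb)
  have hgRb : ∀ ω, |gR ω| ≤ (∑ l ∈ Finset.range T, CS l) + CP T := by
    intro ω
    rw [hgRdef]
    refine habs2 _ _ _ _ ?_ (hCP T _)
    exact (Finset.abs_sum_le_sum_abs _ _).trans (Finset.sum_le_sum fun l _ => hCS l _)
  have hgLb : ∀ ω, |gL ω| ≤ (∑ l ∈ Finset.range T, CS (l+1)) + CP (T+1) := by
    intro ω
    rw [hgLdef]
    refine habs2 _ _ _ _ ?_ (hCP (T+1) _)
    exact (Finset.abs_sum_le_sum_abs _ _).trans (Finset.sum_le_sum fun l _ => hCS (l+1) _)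
  have hgCb : ∀ ω, |gC ω| ≤ CS T + CP (T+1) + CP T := by
    intro ω
    rw [hgCdef]
    calc |stageC A B K Q R x (extendByZero v) (extendByZero ω) T +
          termC A B K P x (extendByZero v) (extendByZero ω) (T+1) -
          termC A B K P x (extendByZero v) (extendByZero ω) T|
        ≤ |stageC A B K Q R x (extendByZero v) (extendByZero ω) T +
            termC A B K P x (extendByZero v) (extendByZero ω) (T+1)| +
          |termC A B K P x (extendByZero v) (extendByZero ω) T| := abs_sub _ _
      _ ≤ CS T + CP (T+1) + CP T :=
          add_le_add (habs2 _ _ _ _ (hCS T _) (hCP (T+1) _)) (hCP T _)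
  -- integrability
  have hgRint : Integrable gR π1 := integrable_of_bounded' hgRm _ hgRb
  have hgCint : Integrable gC π1 := integrable_of_bounded' hgCm _ hgCb
  -- shift identities
  have hstsh : ∀ (q : Fin nq → ℝ) (q' : Fin T → Fin nq → ℝ) (l : ℕ),
      stageC A B K Q R ((A q + B q * K).mulVec x + (B q).mulVec (v ⟨0, hT⟩))
          (extendByZero (fun l : Fin T => if h : (l : ℕ) + 1 < T then v ⟨(l : ℕ) + 1, h⟩ else 0))
          (extendByZero q') l
        = stageC A B K Q R x (extendByZero v)
            (extendByZero (Fin.cons q q' : Fin (T+1) → _)) (l+1) := by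
    intro q q' l
    unfold stageC
    rw [smpcTraj_shift K hT x v q q' l, extendByZero_shift]
  have htmsh : ∀ (q : Fin nq → ℝ) (q' : Fin T → Fin nq → ℝ) (l : ℕ),
      termC A B K P ((A q + B q * K).mulVec x + (B q).mulVec (v ⟨0, hT⟩))
          (extendByZero (fun l : Fin T => if h : (l : ℕ) + 1 < T then v ⟨(l : ℕ) + 1, h⟩ else 0))
          (extendByZero q') l
        = termC A B K P x (extendByZero v)
            (extendByZero (Fin.cons q q' : Fin (T+1) → _)) (l+1) := by
    intro q q' l
    unfold termC
    rw [smpcTraj_shift K hT x v q q' l]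
  -- Step 1: the left-hand side as an integral over the (T+1)-fold product
  have hL1 : ∫ ω, gL ω ∂π1 =
      ∫ q, smpcCost T μ A B K Q R P
        ((A q + B q * K).mulVec x + (B q).mulVec (v ⟨0, hT⟩))
        (fun l : Fin T => if h : (l : ℕ) + 1 < T then v ⟨(l : ℕ) + 1, h⟩ else 0) ∂μ := by
    rw [hπ1, integral_pi_succ_left μ gL hgLm _ hgLb]
    refine integral_congr_ae (Filter.Eventually.of_forall fun q => ?_)
    beta_reduce
    rw [hcost_eq]
    refine integral_congr_ae (Filter.Eventually.of_forall fun q' => ?_)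
    refine Eq.symm ?_
    rw [hgLdef]
    exact congrArg₂ (· + ·)
      (Finset.sum_congr rfl fun l _ => hstsh q q' l) (htmsh q q' T)
  -- Step 2: the nominal cost as an integral over the (T+1)-fold product
  have hR2 : smpcCost T μ A B K Q R P x v = ∫ ω, gR ω ∂π1 := by
    have hinit : ∀ (ω : Fin (T+1) → Fin nq → ℝ) (l : ℕ), l ≤ T →
        smpcTraj A B K x (extendByZero v) (extendByZero (Fin.init ω)) l
          = smpcTraj A B K x (extendByZero v) (extendByZero ω) l := by
      intro ω l hl
      refine smpcTraj_congr K x _ l fun k hk => ?_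
      have hkT : k < T := lt_of_lt_of_le hk hl
      rw [extendByZero_lt _ hkT, extendByZero_lt _ (hkT.trans (Nat.lt_succ_self T))]
      rfl
    have hGm : Measurable fun q' : Fin T → Fin nq → ℝ =>
        (∑ l ∈ Finset.range T,
          stageC A B K Q R x (extendByZero v) (extendByZero q') l) +
        termC A B K P x (extendByZero v) (extendByZero q') T :=
      (Finset.measurable_sum _ fun l _ =>
        stageC_meas K hAmeas hBmeas Q R x (extendByZero v) T l).add
      (termC_meas K hAmeas hBmeas P x (extendByZero v) T T)
    have hGb : ∀ q' : Fin T → Fin nq → ℝ,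
        |(∑ l ∈ Finset.range T,
            stageC A B K Q R x (extendByZero v) (extendByZero q') l) +
          termC A B K P x (extendByZero v) (extendByZero q') T|
          ≤ (∑ l ∈ Finset.range T, CS l) + CP T := by
      intro q'
      refine habs2 _ _ _ _ ?_ (hCP T _)
      exact (Finset.abs_sum_le_sum_abs _ _).trans (Finset.sum_le_sum fun l _ => hCS l _)
    rw [hcost_eq]
    rw [← integral_pi_init μ _ hGm _ hGb]
    refine integral_congr_ae (Filter.Eventually.of_forall fun ω => ?_)
    show (∑ l ∈ Finset.range T,
        stageC A B K Q R x (extendByZero v) (extendByZero (Fin.init ω)) l) +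
      termC A B K P x (extendByZero v) (extendByZero (Fin.init ω)) T = gR ω
    rw [hgRdef]
    refine congrArg₂ (· + ·) (Finset.sum_congr rfl fun l hl => ?_) ?_
    · unfold stageC
      rw [hinit ω l (le_of_lt (Finset.mem_range.1 hl))]
    · unfold termC
      rw [hinit ω T le_rfl]
  -- Step 3: pointwise rearrangement
  have hpt : ∀ ω : Fin (T+1) → Fin nq → ℝ, gL ω = gR ω + (gC ω - s0) := by
    intro ω
    have h2 := Finset.sum_range_succ'
      (stageC A B K Q R x (extendByZero v) (extendByZero ω)) T
    have h3 := Finset.sum_range_succ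
      (stageC A B K Q R x (extendByZero v) (extendByZero ω)) T
    have h0 : stageC A B K Q R x (extendByZero v) (extendByZero ω) 0 = s0 := by
      unfold stageC
      rw [show smpcTraj A B K x (extendByZero v) (extendByZero ω) 0 = x from rfl,
        extendByZero_lt v hT, hs0def]
    rw [hgLdef, hgRdef, hgCdef]
    beta_reduce
    rw [h0] at h2
    linarith [h2, h3]
  -- Step 4: the correction term is nonpositive in expectation
  have hC4 : ∫ ω, gC ω ∂π1 ≤ 0 := by
    -- entrywise facts about the closed-loop matrix
    have hAclm : ∀ k i, Measurable fun q => (A q + B q * K) k i := by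
      intro k i
      simp only [Matrix.add_apply, Matrix.mul_apply]
      exact (hAmeas k i).add
        (Finset.measurable_sum _ fun r _ => (hBmeas k r).mul measurable_const)
    have hAclb : ∃ DA : ℝ, 0 ≤ DA ∧ ∀ q k i, |(A q + B q * K) k i| ≤ DA := by
      obtain ⟨CA, hCA⟩ := hAbdd
      obtain ⟨CB, hCB⟩ := hBbdd
      refine ⟨max CA 0 + max CB 0 * (∑ r : Fin m, ∑ i' : Fin n, |K r i'|), by positivity,
        fun q k i => ?_⟩
      calc |(A q + B q * K) k i| = |A q k i + ∑ r, B q k r * K r i| := by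
            simp [Matrix.add_apply, Matrix.mul_apply]
        _ ≤ |A q k i| + ∑ r, |B q k r * K r i| :=
            (abs_add_le _ _).trans (add_le_add_right (Finset.abs_sum_le_sum_abs _ _) _)
        _ ≤ max CA 0 + ∑ r, max CB 0 * |K r i| := by
            refine add_le_add ((hCA q k i).trans (le_max_left _ _))
              (Finset.sum_le_sum fun r _ => ?_)
            rw [abs_mul]
            exact mul_le_mul_of_nonneg_right ((hCB q k r).trans (le_max_left _ _)) (abs_nonneg _)
        _ = max CA 0 + max CB 0 * ∑ r, |K r i| := by rw [Finset.mul_sum]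
        _ ≤ _ := by
            refine add_le_add_right (mul_le_mul_of_nonneg_left ?_ (le_max_right CB 0)) _
            refine Finset.sum_le_sum fun r _ => ?_
            exact Finset.single_le_sum (f := fun i' => |K r i'|) (fun _ _ => abs_nonneg _)
              (Finset.mem_univ i)
    obtain ⟨DA, hDA0, hDA⟩ := hAclb
    have hentrw : ∀ (q : Fin nq → ℝ) (i j : Fin n),
        ((A q + B q * K)ᵀ * P * (A q + B q * K)) i j
          = (fun k => (A q + B q * K) k i) ⬝ᵥ P.mulVec (fun k => (A q + B q * K) k j) := by
      intro q i j
      simp only [Matrix.mul_apply, Matrix.transpose_apply, dotProduct, mulVec,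
        Finset.sum_mul, Finset.mul_sum]
      rw [Finset.sum_comm]
      exact Finset.sum_congr rfl fun k _ => Finset.sum_congr rfl fun k' _ => by ring
    have hent : ∀ i j, Integrable
        (fun q => ((A q + B q * K)ᵀ * P * (A q + B q * K)) i j) μ := by
      intro i j
      refine integrable_of_bounded' ?_ (∑ k : Fin n, ∑ k' : Fin n, |P k k'| * (DA * DA)) ?_
      · simp only [hentrw]
        exact measurable_bilin P (fun k => hAclm k i) (fun k => hAclm k j)
      · intro q
        rw [hentrw]
        exact abs_bilin_le P hDA0 (fun k => hDA q k i) (fun k => hDA q k j)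
    rw [hπ1, integral_pi_succ_right μ gC hgCm _ hgCb]
    refine integral_nonpos fun q' => ?_
    show (∫ q, gC (Fin.snoc q' q) ∂μ) ≤ 0
    set y := smpcTraj A B K x (extendByZero v) (extendByZero q') T with hy
    have hagree : ∀ (q : Fin nq → ℝ) (k : ℕ), k < T →
        extendByZero (Fin.snoc q' q : Fin (T+1) → Fin nq → ℝ) k = extendByZero q' k := by
      intro q k hk
      rw [extendByZero_lt _ (hk.trans (Nat.lt_succ_self T)), extendByZero_lt _ hk]
      exact Fin.snoc_castSucc (α := fun _ : Fin (T+1) => Fin nq → ℝ) q q' ⟨k, hk⟩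
    have hyT : ∀ q, smpcTraj A B K x (extendByZero v)
        (extendByZero (Fin.snoc q' q : Fin (T+1) → Fin nq → ℝ)) T = y :=
      fun q => smpcTraj_congr K x _ T (fun k hk => hagree q k hk)
    have hlastq : ∀ q : Fin nq → ℝ,
        extendByZero (Fin.snoc q' q : Fin (T+1) → Fin nq → ℝ) T = q := by
      intro q
      rw [extendByZero_lt _ (Nat.lt_succ_self T)]
      exact Fin.snoc_last (α := fun _ : Fin (T+1) => Fin nq → ℝ) q q'
    have hyT1 : ∀ q, smpcTraj A B K x (extendByZero v)
        (extendByZero (Fin.snoc q' q : Fin (T+1) → Fin nq → ℝ)) (T+1)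
          = (A q + B q * K).mulVec y := by
      intro q
      show (A _).mulVec _ + (B _).mulVec (K.mulVec _ + extendByZero v T) = _
      rw [hyT q, hlastq q, extendByZero_ge v le_rfl, add_zero, add_mulVec, mulVec_mulVec]
    have hgCq : ∀ q, gC (Fin.snoc q' q) =
        (y ⬝ᵥ Q.mulVec y + y ⬝ᵥ (Kᵀ * R * K).mulVec y - y ⬝ᵥ P.mulVec y) +
          y ⬝ᵥ ((A q + B q * K)ᵀ * P * (A q + B q * K)).mulVec y := by
      intro q
      rw [hgCdef]
      show stageC A B K Q R x (extendByZero v) (extendByZero (Fin.snoc q' q)) T +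
        termC A B K P x (extendByZero v) (extendByZero (Fin.snoc q' q)) (T+1) -
        termC A B K P x (extendByZero v) (extendByZero (Fin.snoc q' q)) T = _
      unfold stageC termC
      rw [hyT q, hyT1 q, extendByZero_ge v le_rfl, add_zero,
        dotProduct_quadform K R y, dotProduct_quadform (A q + B q * K) P y]
      ring
    have hquadint : Integrable
        (fun q => y ⬝ᵥ ((A q + B q * K)ᵀ * P * (A q + B q * K)).mulVec y) μ := by
      have hrw : (fun q => y ⬝ᵥ ((A q + B q * K)ᵀ * P * (A q + B q * K)).mulVec y)
          = fun q => ∑ i, y i * ∑ j, ((A q + B q * K)ᵀ * P * (A q + B q * K)) i j * y j := by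
        funext q; simp [dotProduct, mulVec]
      rw [hrw]
      exact integrable_finset_sum _ fun i _ =>
        ((integrable_finset_sum _ fun j _ => (hent i j).mul_const _).const_mul _)
    calc ∫ q, gC (Fin.snoc q' q) ∂μ
        = ∫ q, ((y ⬝ᵥ Q.mulVec y + y ⬝ᵥ (Kᵀ * R * K).mulVec y - y ⬝ᵥ P.mulVec y) +
            y ⬝ᵥ ((A q + B q * K)ᵀ * P * (A q + B q * K)).mulVec y) ∂μ :=
          integral_congr_ae (Filter.Eventually.of_forall hgCq)
      _ = (y ⬝ᵥ Q.mulVec y + y ⬝ᵥ (Kᵀ * R * K).mulVec y - y ⬝ᵥ P.mulVec y) +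
            ∫ q, y ⬝ᵥ ((A q + B q * K)ᵀ * P * (A q + B q * K)).mulVec y ∂μ := by
          rw [integral_add (integrable_const _) hquadint, integral_const]
          simp
      _ = (y ⬝ᵥ Q.mulVec y + y ⬝ᵥ (Kᵀ * R * K).mulVec y - y ⬝ᵥ P.mulVec y) +
            y ⬝ᵥ (Matrix.of fun i j =>
              ∫ q, ((A q + B q * K)ᵀ * P * (A q + B q * K)) i j ∂μ).mulVec y := by
          rw [integral_quadform μ hent y]
      _ ≤ 0 := by
          have hps := hLyap.dotProduct_mulVec_nonneg y
          have hstar : star y = y := by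
            funext i; simp
          rw [hstar] at hps
          simp only [sub_mulVec, add_mulVec, dotProduct_sub, dotProduct_add] at hps
          linarith [hps]
  -- Combine
  have hsplit : ∫ ω, gL ω ∂π1 = (∫ ω, gR ω ∂π1) + ((∫ ω, gC ω ∂π1) - s0) := by
    have hsub : Integrable (fun ω => gC ω - s0) π1 := hgCint.sub (integrable_const _)
    rw [integral_congr_ae (Filter.Eventually.of_forall hpt),
      integral_add hgRint hsub, integral_sub hgCint (integrable_const _), integral_const]
    simp
  rw [← hL1, hR2]
  rw [hsplit]
  have hs0 : x ⬝ᵥ Q.mulVec x +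
      (K.mulVec x + v ⟨0, hT⟩) ⬝ᵥ R.mulVec (K.mulVec x + v ⟨0, hT⟩) = s0 := hs0def.symm
  linarith [hC4]
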